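/- Let L be a finite meet-semilattice, let X = {x₁,…,x_n} ⊆ L, and let X̄ = {x₁,…,x_n,x_{n+1},…,x_{n+m}} be the smallest factor-closed subset of L containing X. Let R be a commutative ring; for each x ∈ X fix z_x ∈ X̄ with z_x ≤ x and a function F_x : X̄ → R, and set f_x(z) = ∑_{y ∈ X̄} μ(y,z) F_x(y), where μ is the Möbius function of X̄. Define C_{x,y} = f_x(y) if y ≤ z_x and C_{x,y} = 0 otherwise, and let ζ(u,v) = 1 if u ≤ v and 0 otherwise. Then det( F_{x_i}(z_{x_i} ∧ x_j) )_{1≤i,j≤n} = ∑_{1 ≤ k₁ < k₂ < ⋯ < k_n ≤ n+m} det( C_{x_i, x_{k_j}} )_{1≤i,j≤n} · det( ζ(x_{k_i}, x_j) )_{1≤i,j≤n}. -/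

import Mathlib

open Finset Equiv Function Matrix

private lemma cb_not_inj {R : Type*} [CommRing R] {n N : ℕ} (A : Matrix (Fin n) (Fin N) R)
    (B : Matrix (Fin N) (Fin n) R) {p : Fin n → Fin N} (H : ¬Function.Injective p) :
    (∑ σ : Equiv.Perm (Fin n),
      ((Equiv.Perm.sign σ : ℤ) : R) * ∏ i, A (σ i) (p i) * B (p i) i) = 0 := by
  obtain ⟨i, j, hpij, hij⟩ : ∃ i j, p i = p j ∧ i ≠ j := by
    rw [Function.Injective] at H; push_neg at H; exact H
  refine Finset.sum_involution (fun σ _ => σ * Equiv.swap i j) (fun σ _ => ?_)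
    (fun σ _ _ => (not_congr Equiv.mul_swap_eq_iff).mpr hij) (fun _ _ => mem_univ _)
    (fun σ _ => Equiv.mul_swap_involutive i j σ)
  have h1 : (∏ k, A (σ k) (p k)) = ∏ k, A ((σ * Equiv.swap i j) k) (p k) :=
    Fintype.prod_equiv (Equiv.swap i j) _ _ (by simp [Equiv.apply_swap_eq_self hpij])
  simp [h1, Equiv.Perm.sign_swap hij, -Equiv.Perm.sign_swap', prod_mul_distrib]

private lemma sum_injective_eq {R : Type*} [AddCommMonoid R] {n N : ℕ}
    (g : (Fin n → Fin N) → R) :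
    ∑ p ∈ Finset.univ.filter (fun p : Fin n → Fin N => Function.Injective p), g p
      = ∑ q ∈ (Finset.univ.filter (fun κ : Fin n → Fin N => StrictMono κ)) ×ˢ
          (Finset.univ : Finset (Equiv.Perm (Fin n))), g (q.1 ∘ q.2) := by
  refine (Finset.sum_bij (fun q _ => q.1 ∘ (q.2 : Equiv.Perm (Fin n))) ?_ ?_ ?_ ?_).symm
  · rintro ⟨κ, τ⟩ hq
    simp only [Finset.mem_product, Finset.mem_filter, Finset.mem_univ, true_and] at hq ⊢
    exact hq.1.injective.comp τ.injective
  · rintro ⟨κ₁, τ₁⟩ h1 ⟨κ₂, τ₂⟩ h2 he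
    simp only [Finset.mem_product, Finset.mem_filter, Finset.mem_univ, true_and,
      and_true] at h1 h2
    have he' : κ₁ ∘ ⇑τ₁ = κ₂ ∘ ⇑τ₂ := he
    haveI : WellFoundedLT (Fin n) := Finite.to_wellFoundedLT
    have hr : Set.range κ₁ = Set.range κ₂ := by
      have r1 : Set.range (κ₁ ∘ τ₁) = Set.range κ₁ := τ₁.surjective.range_comp κ₁
      have r2 : Set.range (κ₂ ∘ τ₂) = Set.range κ₂ := τ₂.surjective.range_comp κ₂
      rw [← r1, ← r2, he']
    have hκ : κ₁ = κ₂ := (h1.range_inj h2).1 hr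
    subst hκ
    have hτ : τ₁ = τ₂ := Equiv.ext fun i => h1.injective (congrFun he' i)
    rw [hτ]
  · intro p hp
    simp only [Finset.mem_filter, Finset.mem_univ, true_and] at hp
    have hs : (Finset.univ.image p).card = n := by
      rw [Finset.card_image_of_injective _ hp, Finset.card_univ, Fintype.card_fin]
    have hmemp : ∀ i, p i ∈ Finset.univ.image p :=
      fun i => Finset.mem_image_of_mem p (Finset.mem_univ i)
    have hbij : Function.Bijective
        (fun i => (⟨p i, hmemp i⟩ : (Finset.univ.image p : Finset (Fin N)))) := by
      rw [Fintype.bijective_iff_injective_and_card]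
      refine ⟨fun a b hab => hp (congrArg Subtype.val hab), ?_⟩
      rw [Fintype.card_fin, Fintype.card_coe, hs]
    refine ⟨⟨fun i => (Finset.univ.image p).orderEmbOfFin hs i,
      (Equiv.ofBijective _ hbij).trans
        ((Finset.univ.image p).orderIsoOfFin hs).toEquiv.symm⟩, ?_, ?_⟩
    · simp only [Finset.mem_product, Finset.mem_filter, Finset.mem_univ, true_and, and_true]
      exact ((Finset.univ.image p).orderEmbOfFin hs).strictMono
    · funext i
      simp only [Function.comp_apply, Equiv.trans_apply, Equiv.ofBijective_apply]
      rw [← Finset.coe_orderIsoOfFin_apply]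
      simp
  · intros; rfl

private lemma cauchy_binet {R : Type*} [CommRing R] {n N : ℕ}
    (A : Matrix (Fin n) (Fin N) R) (B : Matrix (Fin N) (Fin n) R) :
    (A * B).det = ∑ κ ∈ Finset.univ.filter (fun κ : Fin n → Fin N => StrictMono κ),
      (A.submatrix id κ).det * (B.submatrix κ id).det := by
  have step1 : (A * B).det = ∑ p : Fin n → Fin N, ∑ σ : Equiv.Perm (Fin n),
      ((Equiv.Perm.sign σ : ℤ) : R) * ∏ i, A (σ i) (p i) * B (p i) i := by
    simp only [Matrix.det_apply', Matrix.mul_apply, Finset.prod_univ_sum, Finset.mul_sum,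
      Fintype.piFinset_univ]
    rw [Finset.sum_comm]
  have step2 : (∑ p : Fin n → Fin N, ∑ σ : Equiv.Perm (Fin n),
      ((Equiv.Perm.sign σ : ℤ) : R) * ∏ i, A (σ i) (p i) * B (p i) i)
      = ∑ p ∈ Finset.univ.filter (fun p : Fin n → Fin N => Function.Injective p),
          ∑ σ : Equiv.Perm (Fin n),
            ((Equiv.Perm.sign σ : ℤ) : R) * ∏ i, A (σ i) (p i) * B (p i) i :=
    (Finset.sum_subset (Finset.filter_subset _ _)
      (fun p _ hp => cb_not_inj A B (by simpa using hp))).symm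
  rw [step1, step2, sum_injective_eq, Finset.sum_product]
  refine Finset.sum_congr rfl fun κ hκ => ?_
  have inner : ∀ τ : Equiv.Perm (Fin n),
      (∑ σ : Equiv.Perm (Fin n), ((Equiv.Perm.sign σ : ℤ) : R)
          * ∏ i, A (σ i) (κ (τ i)) * B (κ (τ i)) i)
        = ∑ ρ : Equiv.Perm (Fin n),
            (((Equiv.Perm.sign ρ : ℤ) : R) * ∏ i, A (ρ i) (κ i))
              * (((Equiv.Perm.sign τ : ℤ) : R) * ∏ i, B (κ (τ i)) i) := by
    intro τ
    refine (Fintype.sum_equiv (Equiv.mulRight τ) _ _ fun ρ => ?_).symm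
    simp only [Equiv.coe_mulRight, Equiv.Perm.coe_mul, Function.comp_apply]
    have hsign : ((Equiv.Perm.sign (ρ * τ) : ℤ) : R)
        = ((Equiv.Perm.sign ρ : ℤ) : R) * ((Equiv.Perm.sign τ : ℤ) : R) := by
      rw [Equiv.Perm.sign_mul]; push_cast; ring
    have hprod : (∏ i, A (ρ (τ i)) (κ (τ i)) * B (κ (τ i)) i)
        = (∏ i, A (ρ i) (κ i)) * ∏ i, B (κ (τ i)) i := by
      rw [Finset.prod_mul_distrib, ← Equiv.prod_comp τ (fun j => A (ρ j) (κ j))]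
    rw [hsign, hprod]
    ring
  simp only [Function.comp_apply]
  rw [Finset.sum_congr rfl fun τ _ => inner τ, Finset.sum_comm, ← Fintype.sum_mul_sum,
    Matrix.det_apply', Matrix.det_apply']
  simp only [Matrix.submatrix_apply, id_eq]

/-- let `L` be a finite meet-semilattice, `X = {x₁,…,x_n}` and
`X̄ = {x₁,…,x_{n+m}}` the smallest factor-closed subset of `L` containing `X`; for each
`1 ≤ i ≤ n` fix `z i ∈ X̄` with `z i ≤ xᵢ`, a function `F i` on `X̄`, and set
`f i v = ∑_{y ∈ X̄} μ(y,v) F i y`.  With `C_{i,j} = f i (x_j)` if `x_j ≤ z i` and `0`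
otherwise, and `ζ(u,v) = 1` if `u ≤ v`, `0` otherwise, one has
`det(F i (z i ∧ x_j))_{1≤i,j≤n} = ∑_{k₁<⋯<k_n} det(C_{i,k_j}) ⋅ det(ζ(x_{k_i},x_j))`. -/
theorem li_expansion {L R : Type*} [Fintype L] [DecidableEq L] [SemilatticeInf L]
    [LocallyFiniteOrder L] [DecidableRel ((· ≤ ·) : L → L → Prop)] [CommRing R]
    {n m : ℕ} (x : Fin (n + m) → L) (hinj : Function.Injective x)
    -- the range of `x` (i.e. `X̄`) is factor closed in `L`
    (hfc : ∀ (j : Fin (n + m)) (w : L), w ≤ x j → ∃ j' : Fin (n + m), x j' = w)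
    -- `X̄` is the smallest such subset: every element of `X̄` lies below some element of `X`
    (hmin : ∀ j : Fin (n + m), ∃ i : Fin n, x j ≤ x (Fin.castAdd m i))
    (z : Fin n → L) (hzmem : ∀ i, ∃ j : Fin (n + m), z i = x j)
    (hz : ∀ i : Fin n, z i ≤ x (Fin.castAdd m i))
    (F : Fin n → L → R)
    (f : Fin n → L → R)
    (hf : ∀ i v, f i v = ∑ j : Fin (n + m), IncidenceAlgebra.mu R (x j) v * F i (x j))
    (C : Fin n → Fin (n + m) → R)
    (hC : ∀ i j, C i j = if x j ≤ z i then f i (x j) else 0) :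
    Matrix.det (Matrix.of fun i j : Fin n => F i (z i ⊓ x (Fin.castAdd m j))) =
      ∑ κ ∈ Finset.univ.filter
          (fun κ : Fin n → Fin (n + m) => ∀ i j : Fin n, i < j → κ i < κ j),
        Matrix.det (Matrix.of fun i j : Fin n => C i (κ j)) *
          Matrix.det (Matrix.of fun i j : Fin n =>
            if x (κ i) ≤ x (Fin.castAdd m j) then (1 : R) else 0) := by
  classical
  set A : Matrix (Fin n) (Fin (n + m)) R := Matrix.of (fun i k => C i k) with hA
  set B : Matrix (Fin (n + m)) (Fin n) R :=
    Matrix.of (fun k j => if x k ≤ x (Fin.castAdd m j) then (1 : R) else 0) with hB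
  -- the key entrywise identity
  have key : (Matrix.of fun i j : Fin n => F i (z i ⊓ x (Fin.castAdd m j))) = A * B := by
    ext i j
    simp only [Matrix.mul_apply, Matrix.of_apply, hA, hB]
    set w : L := z i ⊓ x (Fin.castAdd m j) with hw
    obtain ⟨j₁, hj₁⟩ := hzmem i
    have hwz : w ≤ x j₁ := hj₁ ▸ inf_le_left
    obtain ⟨jw, hjw⟩ := hfc j₁ w hwz
    have step1 : ∀ k : Fin (n + m),
        C i k * (if x k ≤ x (Fin.castAdd m j) then (1 : R) else 0)
          = if x k ≤ w then f i (x k) else 0 := by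
      intro k
      rw [hC]
      by_cases h1 : x k ≤ z i <;> by_cases h2 : x k ≤ x (Fin.castAdd m j) <;>
        simp [h1, h2, hw, le_inf_iff]
    calc (F i (z i ⊓ x (Fin.castAdd m j)))
        = ∑ l : Fin (n + m),
            (∑ k : Fin (n + m), if x k ≤ w then IncidenceAlgebra.mu R (x l) (x k) else 0)
              * F i (x l) := by
          have hmu : ∀ l : Fin (n + m),
              (∑ k : Fin (n + m), if x k ≤ w then IncidenceAlgebra.mu R (x l) (x k) else 0)
                = if x l = w then 1 else 0 := by
            intro l
            have hfil : (∑ k : Fin (n + m),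
                if x k ≤ w then IncidenceAlgebra.mu R (x l) (x k) else 0)
                = ∑ k ∈ Finset.univ.filter (fun k => x l ≤ x k ∧ x k ≤ w),
                    IncidenceAlgebra.mu R (x l) (x k) := by
              rw [Finset.sum_filter]
              refine Finset.sum_congr rfl fun k _ => ?_
              by_cases h1 : x k ≤ w <;> by_cases h2 : x l ≤ x k <;>
                simp [h1, h2, IncidenceAlgebra.apply_eq_zero_of_not_le]
            rw [hfil, ← IncidenceAlgebra.sum_Icc_mu_right (𝕜 := R) (x l) w]
            refine Finset.sum_bij (fun k _ => x k) ?_ ?_ ?_ ?_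
            · intro k hk
              simp only [Finset.mem_filter, Finset.mem_univ, true_and] at hk
              exact Finset.mem_Icc.2 hk
            · intro a _ b _ hab
              exact hinj hab
            · intro u hu
              rw [Finset.mem_Icc] at hu
              obtain ⟨k, hk⟩ := hfc j₁ u (hu.2.trans hwz)
              exact ⟨k, Finset.mem_filter.2 ⟨Finset.mem_univ _, by rw [hk]; exact hu⟩, hk⟩
            · intros; rfl
          simp only [hmu]
          have hsum : (∑ l : Fin (n + m), (if x l = w then (1 : R) else 0) * F i (x l))
              = F i w := by
            rw [Fintype.sum_eq_single jw (fun l hl => by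
              rw [if_neg (fun h => hl (hinj (h.trans hjw.symm))), zero_mul])]
            rw [if_pos hjw, one_mul, hjw]
          exact (hsum.trans (congrArg (F i) hw)).symm
      _ = ∑ l : Fin (n + m), ∑ k : Fin (n + m),
            (if x k ≤ w then IncidenceAlgebra.mu R (x l) (x k) else 0) * F i (x l) := by
          simp [Finset.sum_mul]
      _ = ∑ k : Fin (n + m), if x k ≤ w then f i (x k) else 0 := by
          rw [Finset.sum_comm]
          refine Finset.sum_congr rfl fun k _ => ?_
          rw [hf]
          by_cases h : x k ≤ w <;> simp [h]
      _ = ∑ k : Fin (n + m),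
            C i k * (if x k ≤ x (Fin.castAdd m j) then (1 : R) else 0) := by
          exact Finset.sum_congr rfl fun k _ => (step1 k).symm
  rw [key, cauchy_binet]
  have hset : (Finset.univ.filter (fun κ : Fin n → Fin (n + m) => StrictMono κ))
      = Finset.univ.filter
          (fun κ : Fin n → Fin (n + m) => ∀ i j : Fin n, i < j → κ i < κ j) := by
    apply Finset.filter_congr
    intro κ _
    exact ⟨fun h i j hij => h hij, fun h a b hab => h a b hab⟩
  rw [hset]
  rfl
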